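/- Let 0 < R < P be real constants, let φ : [0,∞) → [0,∞) be an increasing, non-constant, convex function, and for each integer m ≥ 1 define F_m(t) = ∫_{tR}^{tP} (y − tR)^{m−1}/(P−R)^m · exp(−φ(y)) dy. Then for every positive integer m, limsup_{t→∞} ln F_m(t) / φ(R·t) ≥ −1. Moreover, for every α > 1 the set {t ∈ [0,∞) : ln F_m(t)/φ(R·t) ≤ −α} has finite Lebesgue measure. -/

import Mathlib

open MeasureTheory Filter Set


/-- partial geometric sums bound -/
lemma my_geom_bound {r : ℝ} (h0 : 0 ≤ r) (h1 : r < 1) (n : ℕ) :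
    ∑ i ∈ Finset.range n, r ^ i ≤ (1 - r)⁻¹ := by
  have h : 0 < 1 - r := by linarith
  rw [geom_sum_eq h1.ne n]
  rw [div_le_iff_of_neg (by linarith : r - 1 < 0)]
  have : 0 ≤ r ^ n := pow_nonneg h0 n
  have h2 : (1 - r)⁻¹ * (r - 1) = -1 := by
    field_simp
    ring
  rw [h2]; linarith

/-- Key iteration lemma: for monotone φ → ∞, frequently φ(s + e^{-δφ(s)}) ≤ (1+δ)φ(s). -/
lemma key_freq (φ : ℝ → ℝ) (hmono : MonotoneOn φ (Ici 0))
    (htop : Tendsto φ atTop atTop) {δ : ℝ} (hδ : 0 < δ) (S : ℝ) :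
    ∃ s, S ≤ s ∧ 1 ≤ φ s ∧ φ (s + Real.exp (-(δ * φ s))) ≤ (1 + δ) * φ s := by
  by_contra hcon
  push_neg at hcon
  obtain ⟨S₁, hS₁⟩ := (htop.eventually (eventually_ge_atTop (1:ℝ))).exists_forall_of_atTop
  set S₀ : ℝ := max S₁ (max S 0) with hS₀def
  have hS₀S : S ≤ S₀ := le_max_of_le_right (le_max_left _ _)
  have hS₀0 : (0:ℝ) ≤ S₀ := le_max_of_le_right (le_max_right _ _)
  have hφS₀ : ∀ x, S₀ ≤ x → 1 ≤ φ x := fun x hx => hS₁ x (le_trans (le_max_left _ _) hx)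
  -- the sequence
  let u : ℕ → ℝ := fun n => Nat.rec S₀ (fun _ s => s + Real.exp (-(δ * φ s))) n
  have hu0 : u 0 = S₀ := rfl
  have hustep : ∀ n, u (n+1) = u n + Real.exp (-(δ * φ (u n))) := fun n => rfl
  have humono : ∀ n, u n ≤ u (n+1) := by
    intro n; rw [hustep]; nlinarith [Real.exp_pos (-(δ * φ (u n)))]
  have huge : ∀ n, S₀ ≤ u n := by
    intro n; induction n with
    | zero => exact le_of_eq hu0.symm
    | succ k ih => exact ih.trans (humono k)
  have hφu : ∀ n, 1 ≤ φ (u n) := fun n => hφS₀ _ (huge n)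
  have hgrow : ∀ n, (1 + δ)^n ≤ φ (u n) := by
    intro n; induction n with
    | zero => simpa using hφu 0
    | succ k ih =>
      have h1 := hcon (u k) (hS₀S.trans (huge k)) (hφu k)
      rw [hustep]
      calc (1+δ)^(k+1) = (1+δ)^k * (1+δ) := by ring
        _ ≤ φ (u k) * (1+δ) := by nlinarith
        _ = (1+δ) * φ (u k) := by ring
        _ ≤ _ := h1.le
  -- upper bound on u n
  have hr0 : (0:ℝ) ≤ Real.exp (-(δ*δ)) := (Real.exp_pos _).le
  have hr1 : Real.exp (-(δ*δ)) < 1 := by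
    rw [Real.exp_lt_one_iff]; nlinarith
  set B : ℝ := S₀ + Real.exp (-δ) * (1 - Real.exp (-(δ*δ)))⁻¹ with hBdef
  have husum : ∀ n, u n ≤ S₀ + ∑ k ∈ Finset.range n, Real.exp (-δ) * (Real.exp (-(δ*δ)))^k := by
    intro n; induction n with
    | zero => simp [hu0]
    | succ k ih =>
      rw [hustep, Finset.sum_range_succ]
      have hek : Real.exp (-(δ * φ (u k))) ≤ Real.exp (-δ) * (Real.exp (-(δ*δ)))^k := by
        rw [← Real.exp_nat_mul, ← Real.exp_add]
        apply Real.exp_le_exp.2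
        have h1 : 1 + (k:ℝ) * δ ≤ (1+δ)^k := one_add_mul_le_pow (by linarith) k
        have h2 : (1+δ)^k ≤ φ (u k) := hgrow k
        nlinarith
      linarith
  have huB : ∀ n, u n ≤ B := by
    intro n
    have := my_geom_bound hr0 hr1 n
    have h3 : ∑ k ∈ Finset.range n, Real.exp (-δ) * (Real.exp (-(δ*δ)))^k
        ≤ Real.exp (-δ) * (1 - Real.exp (-(δ*δ)))⁻¹ := by
      rw [← Finset.mul_sum]
      exact mul_le_mul_of_nonneg_left this (Real.exp_pos _).le
    calc u n ≤ _ := husum n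
      _ ≤ B := by rw [hBdef]; linarith
  -- contradiction
  obtain ⟨n, hn⟩ := pow_unbounded_of_one_lt (φ B) (by linarith : (1:ℝ) < 1 + δ)
  have : φ (u n) ≤ φ B := hmono (hS₀0.trans (huge n)) (hS₀0.trans ((huge n).trans (huB n))) (huB n)
  have := hgrow n
  linarith


/-- linear growth from convexity + nonconstancy -/
lemma growth (φ : ℝ → ℝ) (hφmono : MonotoneOn φ (Ici 0))
    (hφconv : ConvexOn ℝ (Ici 0) φ)
    (hφnonconst : ∃ a ∈ Ici (0:ℝ), ∃ b ∈ Ici (0:ℝ), φ a ≠ φ b) :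
    ∃ b σ : ℝ, 0 ≤ b ∧ 0 < σ ∧ ∀ x, b ≤ x → φ b + σ * (x - b) ≤ φ x := by
  obtain ⟨a, ha, b, hb, hab⟩ := hφnonconst
  -- order so that a < b and φ a < φ b
  have key : ∀ a b : ℝ, 0 ≤ a → 0 ≤ b → a < b → φ a < φ b →
      ∃ b' σ : ℝ, 0 ≤ b' ∧ 0 < σ ∧ ∀ x, b' ≤ x → φ b' + σ * (x - b') ≤ φ x := by
    intro a b ha hb hlt hφlt
    refine ⟨b, (φ b - φ a) / (b - a), hb, div_pos (by linarith) (by linarith), ?_⟩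
    intro x hx
    rcases eq_or_lt_of_le hx with rfl | hx'
    · simp
    · have := hφconv.slope_mono_adjacent ha (le_trans hb hx'.le) hlt hx'
      have hxb : 0 < x - b := by linarith
      rw [div_le_div_iff₀ (by linarith) hxb] at this
      have h2 : (φ b - φ a) / (b - a) * (x - b) ≤ φ x - φ b := by
        rw [div_mul_eq_mul_div, div_le_iff₀ (by linarith : (0:ℝ) < b - a)]
        linarith
      linarith
  rcases lt_trichotomy a b with h | h | h
  · have : φ a ≤ φ b := hφmono ha hb h.le
    exact key a b ha hb h (lt_of_le_of_ne this hab)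
  · exact absurd (by rw [h]) hab
  · have : φ b ≤ φ a := hφmono hb ha h.le
    exact key b a hb ha h (lt_of_le_of_ne this (Ne.symm hab))

lemma growth_top (φ : ℝ → ℝ) (hφmono : MonotoneOn φ (Ici 0))
    (hφconv : ConvexOn ℝ (Ici 0) φ)
    (hφnonconst : ∃ a ∈ Ici (0:ℝ), ∃ b ∈ Ici (0:ℝ), φ a ≠ φ b) :
    Tendsto φ atTop atTop := by
  obtain ⟨b, σ, hb, hσ, hlin⟩ := growth φ hφmono hφconv hφnonconst
  apply tendsto_atTop_mono' atTop (by
    filter_upwards [eventually_ge_atTop b] with x hx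
    exact hlin x hx)
  have : Tendsto (fun x : ℝ => σ * (x - b) + φ b) atTop atTop :=
    (tendsto_atTop_add_const_right _ _ ((tendsto_id.atTop_add tendsto_const_nhds).const_mul_atTop hσ))
  exact this.congr (fun x => by ring)


section Fbounds
variable {R P : ℝ} (hR : 0 < R) (hRP : R < P) (φ : ℝ → ℝ)
  (hφmono : MonotoneOn φ (Ici 0)) (hφnonneg : ∀ x ∈ Ici (0:ℝ), 0 ≤ φ x)

include hR hRP hφmono hφnonneg in
lemma F_int (m : ℕ) (t : ℝ) (ht : 0 < t) :
    IntervalIntegrable (fun y => (y - t*R)^(m-1)/(P-R)^m * Real.exp (-φ y)) volume (t*R) (t*P) := by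
  have hsb : t*R ≤ t*P := by nlinarith
  have hs0 : 0 < t*R := by positivity
  have huIcc : uIcc (t*R) (t*P) = Icc (t*R) (t*P) := uIcc_of_le hsb
  have hanti : AntitoneOn (fun y => Real.exp (-φ y)) (uIcc (t*R) (t*P)) := by
    rw [huIcc]
    intro x hx y hy hxy
    have hx0 : (0:ℝ) ≤ x := hs0.le.trans hx.1
    have hy0 : (0:ℝ) ≤ y := hs0.le.trans hy.1
    exact Real.exp_le_exp.2 (neg_le_neg (hφmono hx0 hy0 hxy))
  exact hanti.intervalIntegrable.continuousOn_mul
    (((continuous_id.sub continuous_const).pow _).div_const _).continuousOn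

include hR hRP hφmono hφnonneg in
lemma F_lower (m : ℕ) (hm : 1 ≤ m) (t : ℝ) (ht : 0 < t) (ht1 : 1 ≤ t * (P - R))
    (c : ℝ) (hc0 : 0 < c) (hc1 : c ≤ 1) :
    (c/2)^m / (P-R)^m * Real.exp (-φ (t*R + c)) ≤
      ∫ y in (t*R)..(t*P), (y - t*R)^(m-1)/(P-R)^m * Real.exp (-φ y) := by
  obtain ⟨k, rfl⟩ : ∃ k, m = k + 1 := ⟨m - 1, (Nat.succ_pred_eq_of_pos hm).symm⟩
  set s := t * R with hs
  have hs0 : 0 < s := by positivity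
  have hcb : s + c ≤ t * P := by nlinarith
  have hPR : (0:ℝ) < P - R := by linarith
  have hint := F_int hR hRP φ hφmono hφnonneg (k+1) t ht
  have hnn : ∀ y ∈ Ioc (t*R) (t*P), 0 ≤ (y - t*R)^(k+1-1)/(P-R)^(k+1) * Real.exp (-φ y) := by
    intro y hy
    have : 0 ≤ y - t*R := by linarith [hy.1.le]
    positivity
  have step1 : (∫ y in (s+c/2)..(s+c), (y - t*R)^(k+1-1)/(P-R)^(k+1) * Real.exp (-φ y))
      ≤ ∫ y in (t*R)..(t*P), (y - t*R)^(k+1-1)/(P-R)^(k+1) * Real.exp (-φ y) := by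
    apply intervalIntegral.integral_mono_interval (by linarith) (by linarith) hcb
    · filter_upwards [ae_restrict_mem measurableSet_Ioc] with y hy using hnn y hy
    · exact hint
  have hsub : IntervalIntegrable (fun y => (y - t*R)^(k+1-1)/(P-R)^(k+1) * Real.exp (-φ y))
      volume (s+c/2) (s+c) := by
    apply hint.mono_set
    rw [uIcc_of_le (by linarith), uIcc_of_le (by nlinarith)]
    exact Icc_subset_Icc (by linarith) hcb
  set K : ℝ := (c/2)^(k+1-1)/(P-R)^(k+1) * Real.exp (-φ (s + c)) with hK
  have step2 : ((s+c) - (s+c/2)) • K ≤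
      ∫ y in (s+c/2)..(s+c), (y - t*R)^(k+1-1)/(P-R)^(k+1) * Real.exp (-φ y) := by
    rw [← intervalIntegral.integral_const]
    apply intervalIntegral.integral_mono_on (by linarith) (intervalIntegrable_const) hsub
    intro x hx
    rw [hK]
    have h1 : (c/2)^(k+1-1) ≤ (x - t*R)^(k+1-1) := by
      apply pow_le_pow_left₀ (by linarith) (by rw [← hs]; linarith [hx.1])
    have h2 : Real.exp (-φ (s+c)) ≤ Real.exp (-φ x) := by
      apply Real.exp_le_exp.2
      apply neg_le_neg
      apply hφmono (by simp only [mem_Ici]; linarith [hx.1] : x ∈ Ici (0:ℝ))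
        (by simp only [mem_Ici]; linarith : s + c ∈ Ici (0:ℝ)) (by linarith [hx.2])
    have hxnn : (0:ℝ) ≤ (x - t*R)^(k+1-1) := le_trans (by positivity) h1
    have goal : (c/2)^(k+1-1)/(P-R)^(k+1) * Real.exp (-φ (s+c))
        ≤ (x - t*R)^(k+1-1)/(P-R)^(k+1) * Real.exp (-φ x) := by
      gcongr
      all_goals first | positivity | exact h2
    exact goal
  have heq : ((s+c) - (s+c/2)) • K = (c/2)^(k+1) / (P-R)^(k+1) * Real.exp (-φ (s + c)) := by
    rw [hK]; simp only [smul_eq_mul, Nat.add_sub_cancel]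
    ring
  calc (c/2)^(k+1) / (P-R)^(k+1) * Real.exp (-φ (t*R + c)) = ((s+c) - (s+c/2)) • K := heq.symm
    _ ≤ _ := step2
    _ ≤ _ := step1

include hR hRP hφmono hφnonneg in
lemma F_upper (m : ℕ) (hm : 1 ≤ m) (t : ℝ) (ht : 0 < t) :
    (∫ y in (t*R)..(t*P), (y - t*R)^(m-1)/(P-R)^m * Real.exp (-φ y)) ≤ t^m := by
  obtain ⟨k, rfl⟩ : ∃ k, m = k + 1 := ⟨m - 1, (Nat.succ_pred_eq_of_pos hm).symm⟩
  have hPR : (0:ℝ) < P - R := by linarith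
  have hsb : t*R ≤ t*P := by nlinarith
  have hint := F_int hR hRP φ hφmono hφnonneg (k+1) t ht
  have step : (∫ y in (t*R)..(t*P), (y - t*R)^(k+1-1)/(P-R)^(k+1) * Real.exp (-φ y))
      ≤ ∫ _ in (t*R)..(t*P), t^k/(P-R) := by
    apply intervalIntegral.integral_mono_on hsb hint intervalIntegrable_const
    intro x hx
    have hx0 : (0:ℝ) ≤ x := by nlinarith [hx.1]
    have h1 : (x - t*R)^(k+1-1) ≤ (t*(P-R))^(k+1-1) := by
      apply pow_le_pow_left₀ (by linarith [hx.1]) (by nlinarith [hx.2])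
    have h2 : Real.exp (-φ x) ≤ 1 := by
      rw [Real.exp_le_one_iff]
      simpa using hφnonneg x hx0
    calc (x - t*R)^(k+1-1)/(P-R)^(k+1) * Real.exp (-φ x)
        ≤ (t*(P-R))^(k+1-1)/(P-R)^(k+1) * 1 := by
          have hxnn : (0:ℝ) ≤ (x - t*R)^(k+1-1) := pow_nonneg (by linarith [hx.1]) _
          gcongr
          all_goals positivity
        _ = t^k/(P-R) := by
          simp only [Nat.add_sub_cancel, mul_one, mul_pow]
          field_simp
          ring
  calc _ ≤ ∫ _ in (t*R)..(t*P), t^k/(P-R) := step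
    _ = (t*P - t*R) • (t^k/(P-R)) := intervalIntegral.integral_const _
    _ = t^(k+1) := by
      rw [smul_eq_mul, div_eq_mul_inv]; have h := mul_inv_cancel₀ hPR.ne'; linear_combination (t * t^k) * h

end Fbounds


set_option maxHeartbeats 1000000 in
theorem stmt_5 (R P : ℝ) (hR : 0 < R) (hRP : R < P)
    (φ : ℝ → ℝ)
    (hφmono : MonotoneOn φ (Ici 0))
    (hφconv : ConvexOn ℝ (Ici 0) φ)
    (hφnonneg : ∀ x ∈ Ici (0:ℝ), 0 ≤ φ x)
    (hφnonconst : ∃ a ∈ Ici (0:ℝ), ∃ b ∈ Ici (0:ℝ), φ a ≠ φ b)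
    (F : ℕ → ℝ → ℝ)
    (hF : ∀ m : ℕ, 1 ≤ m → ∀ t : ℝ, 0 < t →
      F m t = ∫ y in (t * R)..(t * P),
        (y - t * R) ^ (m - 1) / (P - R) ^ m * Real.exp (-φ y)) :
    ∀ m : ℕ, 1 ≤ m →
      (-1 ≤ limsup (fun t : ℝ => Real.log (F m t) / φ (R * t)) atTop ∧
       ∀ α : ℝ, 1 < α →
         volume {t : ℝ | 0 ≤ t ∧ Real.log (F m t) / φ (R * t) ≤ -α} < ⊤) := by
  obtain ⟨b, σ, hb0, hσ, hlin⟩ := growth φ hφmono hφconv hφnonconst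
  have htop : Tendsto φ atTop atTop := growth_top φ hφmono hφconv hφnonconst
  have hPR : (0:ℝ) < P - R := by linarith
  intro m hm
  have hm0 : (0:ℝ) < m := by exact_mod_cast hm
  set C₁ : ℝ := m * Real.log 2 + m * Real.log (P - R) with hC₁
  -- lower log bound
  have hFpos : ∀ t : ℝ, 0 < t → 1 ≤ t * (P - R) → 0 < F m t := by
    intro t ht ht1
    have hlb := F_lower hR hRP φ hφmono hφnonneg m hm t ht ht1 1 one_pos le_rfl
    rw [hF m hm t ht]
    refine lt_of_lt_of_le ?_ hlb
    positivity
  have hlog_lower : ∀ t : ℝ, 0 < t → 1 ≤ t * (P - R) → ∀ c : ℝ, 0 < c → c ≤ 1 →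
      m * Real.log c - C₁ - φ (t*R + c) ≤ Real.log (F m t) := by
    intro t ht ht1 c hc0 hc1
    have hlb := F_lower hR hRP φ hφmono hφnonneg m hm t ht ht1 c hc0 hc1
    rw [hF m hm t ht]
    have hpos : (0:ℝ) < (c/2)^m / (P-R)^m * Real.exp (-φ (t*R + c)) := by positivity
    refine le_trans (le_of_eq ?_) (Real.log_le_log hpos hlb)
    rw [Real.log_mul (by positivity) (by positivity), Real.log_exp,
        Real.log_div (by positivity) (by positivity), Real.log_pow, Real.log_pow,
        Real.log_div hc0.ne' (by norm_num)]
    rw [hC₁]; push_cast; ring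
  have hlog_upper : ∀ t : ℝ, 0 < t → 1 ≤ t * (P - R) →
      Real.log (F m t) ≤ m * Real.log t := by
    intro t ht ht1
    have hub := F_upper hR hRP φ hφmono hφnonneg m hm t ht
    rw [hF m hm t ht]
    have h0 : (0:ℝ) < ∫ y in (t*R)..(t*P), (y - t*R)^(m-1)/(P-R)^m * Real.exp (-φ y) := by
      have := hFpos t ht ht1; rwa [hF m hm t ht] at this
    calc Real.log _ ≤ Real.log (t^m) := Real.log_le_log h0 hub
      _ = m * Real.log t := by rw [Real.log_pow]
  -- boundedness of the ratio
  have hbdd : IsBoundedUnder (· ≤ ·) atTop (fun t : ℝ => Real.log (F m t) / φ (R*t)) := by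
    apply isBoundedUnder_of_eventually_le (a := (m:ℝ))
    set Cn : ℝ := |σ * b - φ b| with hCn
    have hCn0 : 0 ≤ Cn := abs_nonneg _
    filter_upwards [eventually_ge_atTop (max (max 1 (1/(P-R))) (max (b/R) (((Cn+2)/(σ*R))^2)))]
      with t ht
    have ht1 : (1:ℝ) ≤ t := le_trans (le_max_of_le_left (le_max_left _ _)) ht
    have ht0 : (0:ℝ) < t := by linarith
    have htPR : 1 ≤ t * (P - R) := by
      have : 1/(P-R) ≤ t := le_trans (le_max_of_le_left (le_max_right _ _)) ht
      calc (1:ℝ) = (1/(P-R)) * (P-R) := by field_simp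
        _ ≤ t * (P-R) := by gcongr
    have htb : b ≤ R * t := by
      have : b/R ≤ t := le_trans (le_max_of_le_right (le_max_left _ _)) ht
      calc b = (b/R) * R := by field_simp
        _ ≤ t * R := by gcongr
        _ = R * t := mul_comm t R
    have htsq : ((Cn+2)/(σ*R))^2 ≤ t := le_trans (le_max_of_le_right (le_max_right _ _)) ht
    -- √t facts
    have hsq1 : (1:ℝ) ≤ Real.sqrt t := by
      rw [show (1:ℝ) = Real.sqrt 1 by simp]
      exact Real.sqrt_le_sqrt ht1
    have hsqC : (Cn+2)/(σ*R) ≤ Real.sqrt t :=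
      (Real.le_sqrt' (by positivity)).2 htsq
    have htt : Real.sqrt t * Real.sqrt t = t := Real.mul_self_sqrt ht0.le
    have hlogt : Real.log t ≤ 2 * Real.sqrt t := by
      have h1 : Real.log (Real.sqrt t) ≤ Real.sqrt t - 1 :=
        Real.log_le_sub_one_of_pos (by positivity)
      rw [Real.log_sqrt ht0.le] at h1
      linarith
    have hφlin : σ * (R*t) - (σ*b - φ b) ≤ φ (R*t) := by
      have := hlin (R*t) htb; linarith
    have hφbig : 2 * Real.sqrt t ≤ φ (R*t) := by
      have h2 : (Cn+2) * Real.sqrt t ≤ σ*R*t := by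
        calc (Cn+2) * Real.sqrt t = ((Cn+2)/(σ*R)) * Real.sqrt t * (σ*R) := by field_simp
          _ ≤ Real.sqrt t * Real.sqrt t * (σ*R) := by gcongr <;> positivity
          _ = σ*R*t := by rw [htt]; ring
      have h3 : Cn ≤ Cn * Real.sqrt t := le_mul_of_one_le_right hCn0 hsq1
      have h4 : σ*b - φ b ≤ Cn := le_abs_self _
      nlinarith
    have hφpos : (0:ℝ) < φ (R*t) := by nlinarith
    rw [div_le_iff₀ hφpos]
    have hlogt0 : 0 ≤ Real.log t := Real.log_nonneg ht1
    calc Real.log (F m t) ≤ m * Real.log t := hlog_upper t ht0 htPR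
      _ ≤ m * φ (R*t) := by
          apply mul_le_mul_of_nonneg_left _ (by positivity)
          linarith
  constructor
  · -- limsup part
    apply le_of_forall_pos_le_add
    intro ε hε
    have key : -1 - ε ≤ limsup (fun t : ℝ => Real.log (F m t) / φ (R*t)) atTop := by
      apply le_limsup_of_frequently_le _ hbdd
      rw [frequently_atTop]
      intro a
      set δ₀ : ℝ := min 1 (ε/(2*(m+1))) with hδ₀def
      have hδ₀ : 0 < δ₀ := lt_min one_pos (by positivity)
      have hδ₀1 : δ₀ ≤ 1 := min_le_left _ _
      have hδ₀ε : δ₀*(m+1) ≤ ε/2 := by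
        have : δ₀ ≤ ε/(2*(m+1)) := min_le_right _ _
        calc δ₀*(m+1) ≤ (ε/(2*(m+1)))*(m+1) := by gcongr <;> positivity
          _ = ε/2 := by field_simp
      set M : ℝ := max 1 (2*|C₁|/ε) with hM
      have hM1 : (1:ℝ) ≤ M := le_max_left _ _
      have hMC : |C₁| ≤ (ε/2)*M := by
        calc |C₁| = (ε/2) * (2*|C₁|/ε) := by field_simp
          _ ≤ (ε/2)*M := by gcongr; exact le_max_right _ _
      obtain ⟨Sφ, hSφ⟩ := (htop.eventually (eventually_ge_atTop M)).exists_forall_of_atTop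
      set S : ℝ := max Sφ (max (a*R) (max R (R/(P-R)))) with hS
      obtain ⟨s, hsS, hs1, hkey⟩ := key_freq φ hφmono htop hδ₀ S
      have hsR : R ≤ s := le_trans (le_max_of_le_right (le_max_of_le_right (le_max_left _ _))) hsS
      have hs0 : 0 < s := lt_of_lt_of_le hR hsR
      have hsφM : M ≤ φ s := hSφ s (le_trans (le_max_left _ _) hsS)
      have hsφpos : 0 < φ s := by linarith
      refine ⟨s/R, ?_, ?_⟩
      · rw [le_div_iff₀ hR]
        exact le_trans (le_max_of_le_right (le_max_left _ _)) hsS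
      · have htR : s/R * R = s := div_mul_cancel₀ s hR.ne'
        have ht0 : 0 < s/R := by positivity
        have htPR : 1 ≤ (s/R) * (P - R) := by
          have hsPR : R/(P-R) ≤ s :=
            le_trans (le_max_of_le_right (le_max_of_le_right (le_max_right _ _))) hsS
          rw [div_mul_eq_mul_div, le_div_iff₀ hR]
          calc (1:ℝ)*R = (R/(P-R))*(P-R) := by field_simp
            _ ≤ s*(P-R) := by gcongr
        set c : ℝ := Real.exp (-(δ₀ * φ s)) with hc
        have hc0 : 0 < c := Real.exp_pos _
        have hc1 : c ≤ 1 := Real.exp_le_one_iff.2 (neg_nonpos.mpr (by positivity))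
        have hll := hlog_lower (s/R) ht0 htPR c hc0 hc1
        rw [htR] at hll
        have hlogc : Real.log c = -(δ₀ * φ s) := Real.log_exp _
        have hφsc : φ (s + c) ≤ (1+δ₀) * φ s := hkey
        have hlow : -(1 + δ₀*((m:ℝ)+1)) * φ s - C₁ ≤ Real.log (F m (s/R)) := by
          rw [hlogc] at hll
          have hexp : -(1 + δ₀*((m:ℝ)+1)) * φ s = (m:ℝ)*(-(δ₀ * φ s)) - (1+δ₀)*φ s := by ring
          rw [hexp]
          linarith
        have hRt : R * (s/R) = s := by field_simp
        rw [hRt, le_div_iff₀ hsφpos]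
        have habs : C₁ ≤ |C₁| := le_abs_self _
        have h5 : (ε/2) * M ≤ (ε/2) * φ s := by gcongr <;> positivity
        have hint1 : δ₀*((m:ℝ)+1)*φ s ≤ (ε/2)*φ s := mul_le_mul_of_nonneg_right hδ₀ε hsφpos.le
        have hint2 : C₁ ≤ (ε/2)*φ s := le_trans habs (le_trans hMC h5)
        linarith [hlow, hint1, hint2]
    linarith
  · -- measure part
    intro α hα
    have hα0 : (0:ℝ) < α - 1 := by linarith
    set δ : ℝ := (α-1)/(2*m) with hδdef
    have hδ : 0 < δ := by positivity
    set δ' : ℝ := (α-1)/4 with hδ'def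
    have hδ'pos : 0 < δ' := by positivity
    set M₂ : ℝ := max 1 (4*|C₁|/(α-1)) with hM₂
    have hM₂1 : (1:ℝ) ≤ M₂ := le_max_left _ _
    obtain ⟨Sφ, hSφ⟩ := (htop.eventually (eventually_ge_atTop M₂)).exists_forall_of_atTop
    set T1 : ℝ := max (Sφ/R) (max 1 (1/(P-R))) with hT1def
    have hT1pos : (1:ℝ) ≤ T1 := le_max_of_le_right (le_max_left _ _)
    have hbadkey : ∀ t : ℝ, T1 ≤ t → Real.log (F m t) / φ (R*t) ≤ -α →
        1 ≤ φ (R*t) ∧ (1+δ') * φ (R*t) ≤ φ (R*t + Real.exp (-(δ * φ (R*t)))) := by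
      intro t hTt hratio
      have ht1 : (1:ℝ) ≤ t := le_trans hT1pos hTt
      have ht0 : (0:ℝ) < t := by linarith
      have htPR : 1 ≤ t * (P - R) := by
        have h7 : 1/(P-R) ≤ t := le_trans (le_max_of_le_right (le_max_right _ _)) hTt
        calc (1:ℝ) = (1/(P-R)) * (P-R) := by field_simp
          _ ≤ t * (P-R) := by gcongr
      have hRtSφ : Sφ ≤ R*t := by
        have h8 : Sφ/R ≤ t := le_trans (le_max_left _ _) hTt
        calc Sφ = (Sφ/R) * R := by field_simp
          _ ≤ t * R := by gcongr
          _ = R * t := mul_comm t R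
      have hφM₂ : M₂ ≤ φ (R*t) := hSφ _ hRtSφ
      have hφ1 : (1:ℝ) ≤ φ (R*t) := le_trans hM₂1 hφM₂
      have hφpos : (0:ℝ) < φ (R*t) := by linarith
      refine ⟨hφ1, ?_⟩
      rw [div_le_iff₀ hφpos] at hratio
      set c : ℝ := Real.exp (-(δ * φ (R*t))) with hc
      have hc0 : 0 < c := Real.exp_pos _
      have hc1 : c ≤ 1 := Real.exp_le_one_iff.2 (neg_nonpos.mpr (by positivity))
      have hll := hlog_lower t ht0 htPR c hc0 hc1
      rw [mul_comm t R] at hll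
      have hlogc : Real.log c = -(δ * φ (R*t)) := Real.log_exp _
      have h6 : (m:ℝ) * -(δ * φ (R*t)) = -((α-1)/2 * φ (R*t)) := by
        rw [hδdef]; field_simp
      rw [hlogc, h6] at hll
      have hC₁M₂ : |C₁| ≤ ((α-1)/4)*M₂ := by
        calc |C₁| = ((α-1)/4) * (4*|C₁|/(α-1)) := by field_simp
          _ ≤ ((α-1)/4)*M₂ := by gcongr; exact le_max_right _ _
      have hint2 : C₁ ≤ ((α-1)/4) * φ (R*t) := by
        have h9 : ((α-1)/4)*M₂ ≤ ((α-1)/4)*φ (R*t) := by gcongr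
        linarith [le_abs_self C₁]
      rw [hδ'def]
      nlinarith [hll, hratio, hint2]
    set A : ℕ → Set ℝ := fun k => {t : ℝ | T1 ≤ t ∧ (1+δ')^k ≤ φ (R*t) ∧
        φ (R*t) < (1+δ')^(k+1) ∧
        (1+δ') * φ (R*t) ≤ φ (R*t + Real.exp (-(δ * φ (R*t))))} with hA
    have hcover : {t : ℝ | 0 ≤ t ∧ Real.log (F m t) / φ (R*t) ≤ -α} ⊆
        Icc 0 T1 ∪ ⋃ k, A k := by
      rintro t ⟨ht0, hrat⟩
      rcases le_or_gt t T1 with h | h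
      · exact Or.inl ⟨ht0, h⟩
      · right
        obtain ⟨h1φ, hbt⟩ := hbadkey t h.le hrat
        obtain ⟨k, hk1, hk2⟩ := exists_nat_pow_near h1φ (by linarith : (1:ℝ) < 1+δ')
        exact mem_iUnion.2 ⟨k, h.le, hk1, hk2, hbt⟩
    have hAk : ∀ k : ℕ, volume (A k) ≤
        ENNReal.ofReal (2 * (Real.exp (-(δ * (1+δ')^k)) / R)) := by
      intro k
      rcases eq_empty_or_nonempty (A k) with he | ⟨t₀, ht₀⟩
      · simp [he]
      · set w : ℝ := Real.exp (-(δ * (1+δ')^k)) / R with hw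
        have hw0 : 0 < w := by positivity
        have hpair : ∀ t1 ∈ A k, ∀ t2 ∈ A k, t1 ≤ t2 → t2 - t1 ≤ w := by
          intro t1 h1 t2 h2 hle
          obtain ⟨hT1t1, hk1, -, hb1⟩ := h1
          obtain ⟨hT1t2, -, hk2', -⟩ := h2
          have ht1pos : (0:ℝ) < t1 := lt_of_lt_of_le (by linarith) hT1t1
          have ht2pos : (0:ℝ) < t2 := lt_of_lt_of_le ht1pos hle
          have hc1 : R*t2 < R*t1 + Real.exp (-(δ * φ (R*t1))) := by
            by_contra hcon
            push_neg at hcon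
            have hmem1 : R*t1 + Real.exp (-(δ * φ (R*t1))) ∈ Ici (0:ℝ) := by
              have : (0:ℝ) < R*t1 := by positivity
              have := (Real.exp_pos (-(δ * φ (R*t1)))).le
              simp only [mem_Ici]; linarith
            have hmem2 : R*t2 ∈ Ici (0:ℝ) := by simp only [mem_Ici]; positivity
            have hmo := hφmono hmem1 hmem2 hcon
            have hstep : (1+δ') * φ (R*t1) ≤ φ (R*t2) := le_trans hb1 hmo
            have hpow : (1+δ')^(k+1) ≤ (1+δ') * φ (R*t1) := by
              rw [pow_succ]
              calc (1+δ')^k * (1+δ') ≤ φ (R*t1) * (1+δ') := by gcongr <;> linarith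
                _ = (1+δ') * φ (R*t1) := mul_comm _ _
            linarith
          have hdiff : R*(t2 - t1) < Real.exp (-(δ * φ (R*t1))) := by
            rw [mul_sub]; linarith
          have hee : Real.exp (-(δ * φ (R*t1))) ≤ Real.exp (-(δ * (1+δ')^k)) := by
            apply Real.exp_le_exp.2
            have := mul_le_mul_of_nonneg_left hk1 hδ.le
            linarith
          rw [hw, le_div_iff₀ hR]
          calc (t2 - t1) * R = R * (t2 - t1) := mul_comm _ _
            _ ≤ Real.exp (-(δ * (1+δ')^k)) := by linarith
        have hsub : A k ⊆ Icc (t₀ - w) (t₀ + w) := by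
          intro t htk
          rcases le_total t t₀ with h | h
          · have := hpair t htk t₀ ht₀ h
            exact ⟨by linarith, by linarith⟩
          · have := hpair t₀ ht₀ t htk h
            exact ⟨by linarith, by linarith⟩
        calc volume (A k) ≤ volume (Icc (t₀ - w) (t₀ + w)) := measure_mono hsub
          _ = ENNReal.ofReal (2 * w) := by
              rw [Real.volume_Icc]
              congr 1
              ring
    have hgeom : ∑' k : ℕ, volume (A k) < ⊤ := by
      have hbound : ∀ k : ℕ, volume (A k) ≤
          ENNReal.ofReal (2/R * Real.exp (-δ)) * (ENNReal.ofReal (Real.exp (-(δ*δ'))))^k := by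
        intro k
        refine le_trans (hAk k) ?_
        rw [← ENNReal.ofReal_pow (Real.exp_pos _).le, ← ENNReal.ofReal_mul (by positivity)]
        apply ENNReal.ofReal_le_ofReal
        have hexpeq : Real.exp (-δ) * Real.exp (-(δ*δ'))^k = Real.exp (-δ + (k:ℝ)*(-(δ*δ'))) := by
          rw [← Real.exp_nat_mul, ← Real.exp_add]
        have h1 : 1 + (k:ℝ)*δ' ≤ (1+δ')^k := one_add_mul_le_pow (by linarith) k
        have h2 : Real.exp (-(δ*(1+δ')^k)) ≤ Real.exp (-δ + (k:ℝ)*(-(δ*δ'))) := by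
          apply Real.exp_le_exp.2
          have h3 := mul_le_mul_of_nonneg_left h1 hδ.le
          nlinarith
        calc 2 * (Real.exp (-(δ*(1+δ')^k))/R) ≤ 2*(Real.exp (-δ + (k:ℝ)*(-(δ*δ')))/R) := by gcongr
          _ = 2/R * (Real.exp (-δ) * Real.exp (-(δ*δ'))^k) := by rw [hexpeq]; ring
          _ = 2/R * Real.exp (-δ) * Real.exp (-(δ*δ'))^k := by ring
      calc ∑' k : ℕ, volume (A k)
          ≤ ∑' k : ℕ, ENNReal.ofReal (2/R * Real.exp (-δ)) * (ENNReal.ofReal (Real.exp (-(δ*δ'))))^k :=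
            ENNReal.tsum_le_tsum hbound
        _ = ENNReal.ofReal (2/R * Real.exp (-δ)) * (1 - ENNReal.ofReal (Real.exp (-(δ*δ'))))⁻¹ := by
            rw [ENNReal.tsum_mul_left, ENNReal.tsum_geometric]
        _ < ⊤ := by
            apply ENNReal.mul_lt_top ENNReal.ofReal_lt_top
            apply ENNReal.inv_lt_top.2
            apply tsub_pos_of_lt
            apply ENNReal.ofReal_lt_one.2
            apply Real.exp_lt_one_iff.2
            nlinarith
    calc volume {t : ℝ | 0 ≤ t ∧ Real.log (F m t) / φ (R*t) ≤ -α}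
        ≤ volume (Icc 0 T1 ∪ ⋃ k, A k) := measure_mono hcover
      _ ≤ volume (Icc 0 T1) + volume (⋃ k, A k) := measure_union_le _ _
      _ ≤ volume (Icc 0 T1) + ∑' k : ℕ, volume (A k) :=
          add_le_add_right (measure_iUnion_le _) _
      _ < ⊤ := by
          rw [Real.volume_Icc]
          exact ENNReal.add_lt_top.2 ⟨ENNReal.ofReal_lt_top, hgeom⟩
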